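/- arXiv:1011.1566 — 2 statements merged into one kernel-verified Lean document; each statement's English description precedes it below -/
import Mathlib

section
/- For σ² > 0, m > 1, and α = α_crit the positive root of mα² + σ²(m+1)α − σ² = 0, the function S(p) = 2 log(1 + p/(σ² + α(1−p))) + 2 log(1 + (1−p)/(σ² + mαp)) is constant in p on the interval where all denominators are positive; equivalently, dS/dp = 0 for all such p. -/
/-- At the critical interference level α = α_crit (the positive root of
mα² + σ²(m+1)α − σ² = 0), the sum-rate S(p) is constant in p: dS/dp = 0
wherever the denominators are positive. -/
theorem sum_rate_constant_at_alpha_crit (σ2 m α : ℝ) (hσ : 0 < σ2) (hm : 1 < m)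
    (hα : 0 < α) (hroot : m * α ^ 2 + σ2 * (m + 1) * α - σ2 = 0) :
    ∀ p : ℝ, 0 < σ2 + α * (1 - p) → 0 < σ2 + m * α * p →
      HasDerivAt (fun x : ℝ =>
          2 * Real.log (1 + x / (σ2 + α * (1 - x))) +
          2 * Real.log (1 + (1 - x) / (σ2 + m * α * x)))
        0 p := by
  intro p h1 h2
  have hm0 : (0:ℝ) < m := lt_trans one_pos hm
  have hma : (m+1) * α < 1 := by nlinarith [mul_pos (mul_pos hm0 hα) hα]
  have hα1 : α < 1 := by nlinarith
  have hmα1 : m * α < 1 := by nlinarith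
  -- positivity of numerators
  have hN1 : 0 < σ2 + α * (1 - p) + p := by
    nlinarith [mul_pos (sub_pos.2 hα1) h2, mul_pos (mul_pos hm0 hα) hσ]
  have hN2 : 0 < σ2 + m * α * p + (1 - p) := by
    nlinarith [mul_pos (sub_pos.2 hmα1) h1]
  have hD1 : σ2 + α * (1 - p) ≠ 0 := ne_of_gt h1
  have hD2 : σ2 + m * α * p ≠ 0 := ne_of_gt h2
  have hpos1 : 0 < 1 + p / (σ2 + α * (1 - p)) := by
    have : 1 + p / (σ2 + α * (1 - p)) = (σ2 + α * (1 - p) + p) / (σ2 + α * (1 - p)) := by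
      field_simp
    rw [this]; exact div_pos hN1 h1
  have hpos2 : 0 < 1 + (1 - p) / (σ2 + m * α * p) := by
    have : 1 + (1 - p) / (σ2 + m * α * p) = (σ2 + m * α * p + (1 - p)) / (σ2 + m * α * p) := by
      rw [one_add_div hD2]
    rw [this]; exact div_pos hN2 h2
  -- derivatives of denominators
  have hd1 : HasDerivAt (fun x : ℝ => σ2 + α * (1 - x)) (α * (-1)) p := by
    exact (((hasDerivAt_id p).const_sub 1).const_mul α).const_add σ2
  have hd2 : HasDerivAt (fun x : ℝ => σ2 + m * α * x) (m * α * 1) p := by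
    exact ((hasDerivAt_id p).const_mul (m * α)).const_add σ2
  have harg1 : HasDerivAt (fun x : ℝ => 1 + x / (σ2 + α * (1 - x)))
      ((1 * (σ2 + α * (1 - p)) - p * (α * (-1))) / (σ2 + α * (1 - p)) ^ 2) p :=
    ((hasDerivAt_id p).div hd1 hD1).const_add 1
  have hn2 : HasDerivAt (fun x : ℝ => 1 - x) (-1 : ℝ) p := (hasDerivAt_id p).const_sub 1
  have harg2 : HasDerivAt (fun x : ℝ => 1 + (1 - x) / (σ2 + m * α * x))
      (((-1) * (σ2 + m * α * p) - (1 - p) * (m * α * 1)) / (σ2 + m * α * p) ^ 2) p :=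
    (hn2.div hd2 hD2).const_add 1
  have hlog1 := (harg1.log (ne_of_gt hpos1)).const_mul 2
  have hlog2 := (harg2.log (ne_of_gt hpos2)).const_mul 2
  have := hlog1.add hlog2
  refine this.congr_deriv ?_; symm
  have e1 : 1 + p / (σ2 + α * (1 - p)) ≠ 0 := ne_of_gt hpos1
  have e2 : 1 + (1 - p) / (σ2 + m * α * p) ≠ 0 := ne_of_gt hpos2
  rw [one_add_div hD1, one_add_div hD2]
  have e3 := hN1.ne'
  have e4 := hN2.ne'
  have e5 : σ2 + α * p * m ≠ 0 := by intro h; apply hD2; linear_combination h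
  have e6 : σ2 + α * p * m + (1 - p) ≠ 0 := by intro h; apply e4; linear_combination h
  field_simp
  linear_combination (-2) *
    ((m - 1) * α * p ^ 2 + 2 * α * p - α + 2 * σ2 * p - σ2) * hroot
end

section
/- Fix constants μ ∈ ℝ, c : Fin N → ℝ, and bounds 0 ≤ pmax(k). Define p*(k) = min(max(μ − c(k), 0), pmax(k)). Then p* maximizes ∑_k log(1 + p(k)/c'(k)) over {p : 0 ≤ p(k) ≤ pmax(k), ∑_k p(k) = P_T} whenever c'(k) = c(k) > 0 for all k and ∑_k p*(k) = P_T; that is, the clipped waterfilling solution satisfies the KKT conditions and is optimal for the concave problem. -/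
/-- The clipped waterfilling solution p*(k) = [μ − c(k)]₀^{pmax(k)} is optimal
for the single-user concave rate maximization over the capped simplex. -/
theorem waterfilling_optimal {N : ℕ} (hN : 0 < N) (μ PT : ℝ)
    (c pmax : Fin N → ℝ) (hc : ∀ k, 0 < c k) (hpmax : ∀ k, 0 ≤ pmax k)
    (pstar : Fin N → ℝ)
    (hpstar : ∀ k, pstar k = min (max (μ - c k) 0) (pmax k))
    (hsum : ∑ k, pstar k = PT) :
    ∀ p : Fin N → ℝ, (∀ k, 0 ≤ p k ∧ p k ≤ pmax k) → (∑ k, p k = PT) →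
      ∑ k, Real.log (1 + p k / c k) ≤ ∑ k, Real.log (1 + pstar k / c k) := by
  intro p hp hpsum
  have hpst_nonneg : ∀ k, 0 ≤ pstar k := by
    intro k; rw [hpstar k]; exact le_min (le_max_right _ _) (hpmax k)
  have hden : ∀ k, 0 < c k + pstar k := fun k => by
    have := hpst_nonneg k; have := hc k; linarith
  have key : ∀ k, Real.log (1 + p k / c k) - Real.log (1 + pstar k / c k)
      ≤ (p k - pstar k) / (c k + pstar k) := by
    intro k
    have hck := hc k
    have hcp : 0 < c k + p k := by have := (hp k).1; linarith
    have h1 : 1 + p k / c k = (c k + p k) / c k := by field_simp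
    have h2 : 1 + pstar k / c k = (c k + pstar k) / c k := by field_simp
    rw [h1, h2, Real.log_div (ne_of_gt hcp) (ne_of_gt hck),
        Real.log_div (ne_of_gt (hden k)) (ne_of_gt hck)]
    have hq : 0 < (c k + p k) / (c k + pstar k) := div_pos hcp (hden k)
    have := Real.log_le_sub_one_of_pos hq
    rw [Real.log_div (ne_of_gt hcp) (ne_of_gt (hden k))] at this
    have e : (c k + p k) / (c k + pstar k) - 1 = (p k - pstar k) / (c k + pstar k) := by
      rw [div_sub_one (ne_of_gt (hden k))]; ring_nf
    linarith
  have sum_le : ∑ k, (p k - pstar k) / (c k + pstar k) ≤ 0 := by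
    by_cases hμ : 0 < μ
    · have pt : ∀ k, (p k - pstar k) / (c k + pstar k) ≤ (p k - pstar k) / μ := by
        intro k
        rw [div_le_div_iff₀ (hden k) hμ]
        have hck := hc k
        have hp1 := (hp k).1
        have hp2 := (hp k).2
        rcases le_total (μ - c k) 0 with h0 | h0
        · have hs : pstar k = 0 := by
            rw [hpstar k, max_eq_right h0, min_eq_left (hpmax k)]
          rw [hs]; nlinarith
        · rw [hpstar k, max_eq_left h0] at *
          rcases le_total (μ - c k) (pmax k) with h1 | h1
          · rw [min_eq_left h1]; nlinarith
          · rw [min_eq_right h1]; nlinarith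
      calc ∑ k, (p k - pstar k) / (c k + pstar k)
          ≤ ∑ k, (p k - pstar k) / μ := Finset.sum_le_sum fun k _ => pt k
        _ = ((∑ k, p k) - ∑ k, pstar k) / μ := by
            rw [← Finset.sum_sub_distrib, Finset.sum_div]
        _ = 0 := by rw [hpsum, hsum]; simp
    · push_neg at hμ
      have hs0 : ∀ k, pstar k = 0 := by
        intro k
        have : μ - c k ≤ 0 := by have := hc k; linarith
        rw [hpstar k, max_eq_right this, min_eq_left (hpmax k)]
      have hPT : PT = 0 := by rw [← hsum]; simp [hs0]
      have hp0 : ∀ k ∈ Finset.univ, p k = 0 := by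
        rw [← Finset.sum_eq_zero_iff_of_nonneg fun k _ => (hp k).1]
        rw [hpsum, hPT]
      have : ∀ k ∈ (Finset.univ : Finset (Fin N)),
          (p k - pstar k) / (c k + pstar k) = 0 := by
        intro k hk; rw [hp0 k hk, hs0 k]; simp
      rw [Finset.sum_congr rfl this]; simp
  have := Finset.sum_le_sum fun k (_ : k ∈ Finset.univ) => key k
  rw [Finset.sum_sub_distrib] at this
  linarith
end
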